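/- Fix ε ∈ (0, 1/2], an integer m ≥ 1 and d ∈ [0,1]. Write t = tanh(ε/2). Let b_1, …, b_m be i.i.d. Bernoulli(1/2 + t(d − 1/2)) random variables, let L be an independent real random variable with Laplace(0, 1/(εm)) distribution, and define the estimator d̃ = (1/t)·((1/m)·Σ_{i=1}^m b_i − 1/2 + t/2) + L. Then E[d̃] = d, and the mean squared error satisfies E[(d̃ − d)²] = (1/(4m))·(1/t² − 1) + d(1−d)/m + 2/(m²ε²) ≤ 1/(4m·t²) + 2/(m²ε²). -/

import Mathlib

open MeasureTheory ProbabilityTheory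

/-- The law of a `Laplace(0, b)` random variable: the measure on `ℝ` with density
`x ↦ (1/(2b))·exp(−|x|/b)` with respect to Lebesgue measure. -/
noncomputable def laplaceMeasure (b : ℝ) : Measure ℝ :=
  volume.withDensity fun x => ENNReal.ofReal (1 / (2 * b) * Real.exp (-|x| / b))

section LaplaceAux

open MeasureTheory Real Set Filter
open scoped ENNReal NNReal


lemma aux_exp_int {c : ℝ} (hc : 0 < c) (n : ℕ) :
    IntegrableOn (fun x : ℝ => x ^ n * Real.exp (-c * x)) (Set.Ioi 0) := by
  apply integrable_of_isBigO_exp_neg (b := c/2) (by linarith)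
  · exact (Continuous.continuousOn (by continuity))
  · have h0 : Tendsto (fun x : ℝ => x ^ n * Real.exp (-(c/2) * x)) atTop (nhds 0) := by
      have h1 := ((tendsto_pow_mul_exp_neg_atTop_nhds_zero n).comp
        (Filter.Tendsto.const_mul_atTop (show (0:ℝ) < c/2 by linarith) tendsto_id)).const_mul
        ((2/c)^n)
      rw [mul_zero] at h1
      refine Filter.Tendsto.congr (fun x => ?_) h1
      simp only [Function.comp_apply, id_eq]
      rw [← mul_assoc, ← mul_pow, show (2/c) * (c/2 * x) = x by field_simp,
        show -(c/2*x) = -(c/2)*x by ring]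
    have hev := NormedAddCommGroup.tendsto_nhds_zero.mp h0 1 one_pos
    apply Asymptotics.IsBigO.of_bound 1
    filter_upwards [hev] with x hx
    have hexp : Real.exp (-c * x) = Real.exp (-(c/2) * x) * Real.exp (-(c/2) * x) := by
      rw [← Real.exp_add]; ring_nf
    rw [Real.norm_eq_abs, Real.norm_eq_abs, one_mul, abs_of_pos (Real.exp_pos _), hexp,
      ← mul_assoc, abs_mul, abs_of_pos (Real.exp_pos (-(c/2) * x))]
    have h2 : |x ^ n * Real.exp (-(c/2)*x)| ≤ 1 := by
      rw [← Real.norm_eq_abs]; exact hx.le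
    nlinarith [Real.exp_pos (-(c/2)*x), abs_nonneg (x ^ n * Real.exp (-(c/2)*x))]

lemma aux_exp_val {c : ℝ} (hc : 0 < c) (n : ℕ) :
    ∫ x in Set.Ioi (0:ℝ), x ^ n * Real.exp (-c * x) = n.factorial / c ^ (n+1) := by
  have h := integral_rpow_mul_exp_neg_mul_rpow (p := 1) (q := n) one_pos
    (lt_of_lt_of_le neg_one_lt_zero (Nat.cast_nonneg n)) hc
  simp only [Real.rpow_one, Real.rpow_natCast, div_one, one_div_one, one_mul] at h
  rw [h, Real.Gamma_nat_eq_factorial]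
  rw [show (-((n:ℝ) + 1)) = -(((n+1 : ℕ) : ℝ)) by push_cast; ring]
  rw [Real.rpow_neg hc.le, Real.rpow_natCast]
  ring

lemma aux_integrable_comp_abs {f : ℝ → ℝ} (hf : IntegrableOn f (Set.Ioi 0)) :
    Integrable (fun x => f |x|) := by
  have hIoi : IntegrableOn (fun x => f |x|) (Set.Ioi 0) := by
    apply hf.congr_fun (fun x hx => ?_) measurableSet_Ioi
    rw [abs_of_pos hx]
  have hIic : IntegrableOn (fun x => f |x|) (Set.Iic 0) := by
    rw [← Measure.map_neg_eq_self (volume : Measure ℝ)]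
    have m : MeasurableEmbedding fun x : ℝ => -x := (Homeomorph.neg ℝ).measurableEmbedding
    rw [m.integrableOn_map_iff]
    simp_rw [Function.comp_def, abs_neg, Set.neg_preimage, Set.neg_Iic, neg_zero]
    exact Iff.mpr integrableOn_Ici_iff_integrableOn_Ioi hIoi
  have := hIic.union hIoi
  rwa [Set.Iic_union_Ioi, integrableOn_univ] at this

lemma aux_integral_odd (f : ℝ → ℝ) (hodd : ∀ x, f (-x) = - f x) : ∫ x, f x = 0 := by
  have h : ∫ x, f (-x) = ∫ x, f x := integral_neg_eq_self f volume
  simp only [hodd] at h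
  rw [integral_neg] at h
  linarith


lemma aux_g_meas (b : ℝ) :
    Measurable fun x : ℝ => (1 / (2 * b) * Real.exp (-|x| / b)).toNNReal := by
  fun_prop

lemma laplace_integral_eq (b : ℝ) (hb : 0 < b) (φ : ℝ → ℝ) :
    ∫ x, φ x ∂(laplaceMeasure b) = ∫ x, (1 / (2 * b) * Real.exp (-|x| / b)) * φ x := by
  rw [show laplaceMeasure b = volume.withDensity
      (fun x => ((1 / (2 * b) * Real.exp (-|x| / b)).toNNReal : ℝ≥0∞)) from rfl]
  rw [integral_withDensity_eq_integral_smul (aux_g_meas b) φ]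
  congr 1
  funext x
  rw [NNReal.smul_def, Real.coe_toNNReal _ (by positivity), smul_eq_mul]

lemma laplace_integrable_iff (b : ℝ) (hb : 0 < b) (φ : ℝ → ℝ) :
    Integrable φ (laplaceMeasure b) ↔
      Integrable (fun x => (1 / (2 * b) * Real.exp (-|x| / b)) * φ x) := by
  rw [show laplaceMeasure b = volume.withDensity
      (fun x => ((1 / (2 * b) * Real.exp (-|x| / b)).toNNReal : ℝ≥0∞)) from rfl]
  rw [integrable_withDensity_iff_integrable_smul (aux_g_meas b)]
  apply integrable_congr
  filter_upwards with x
  rw [NNReal.smul_def, Real.coe_toNNReal _ (by positivity), smul_eq_mul]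

lemma laplace_pdf_mul_integrable (b : ℝ) (hb : 0 < b) (n : ℕ) :
    Integrable (fun x : ℝ => (1 / (2 * b) * Real.exp (-|x| / b)) * x ^ n) := by
  have h1 : IntegrableOn (fun u : ℝ => 1 / (2 * b) * Real.exp (-(1/b) * u) * u ^ n)
      (Set.Ioi 0) := by
    have h0 := (aux_exp_int (c := 1/b) (by positivity) n).const_mul (1 / (2 * b))
    exact MeasureTheory.IntegrableOn.congr_fun h0 (fun x _ => by ring) measurableSet_Ioi
  have h2 := aux_integrable_comp_abs h1
  apply h2.mono' ?_ ?_
  · exact (by fun_prop : Measurable fun x : ℝ =>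
      (1 / (2 * b) * Real.exp (-|x| / b)) * x ^ n).aestronglyMeasurable
  · filter_upwards with x
    refine le_of_eq ?_
    have hpos : (0:ℝ) < 1 / (2 * b) := by positivity
    rw [Real.norm_eq_abs, abs_mul, abs_mul, abs_of_pos hpos, abs_of_pos (Real.exp_pos _),
      abs_pow]
    rw [show -|x| / b = -(1/b) * |x| by ring]

lemma laplace_first_moment (b : ℝ) (hb : 0 < b) :
    ∫ x, (1 / (2 * b) * Real.exp (-|x| / b)) * x = 0 := by
  apply aux_integral_odd
  intro x
  rw [abs_neg]; ring

lemma laplace_second_moment (b : ℝ) (hb : 0 < b) :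
    ∫ x, (1 / (2 * b) * Real.exp (-|x| / b)) * x ^ 2 = 2 * b ^ 2 := by
  have heq : (fun x : ℝ => (1 / (2 * b) * Real.exp (-|x| / b)) * x ^ 2) =
      fun x : ℝ => 1 / (2 * b) * (|x| ^ 2 * Real.exp (-(1/b) * |x|)) := by
    funext x
    rw [sq_abs, show -(1/b) * |x| = -|x| / b by ring]
    ring
  have h3 : ∫ x : ℝ, 1 / (2 * b) * (|x| ^ 2 * Real.exp (-(1/b) * |x|)) =
      2 * ∫ x in Set.Ioi (0:ℝ), 1 / (2 * b) * (x ^ 2 * Real.exp (-(1/b) * x)) :=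
    integral_comp_abs (f := fun u : ℝ => 1 / (2 * b) * (u ^ 2 * Real.exp (-(1/b) * u)))
  rw [heq, h3, integral_const_mul, aux_exp_val (by positivity : (0:ℝ) < 1/b) 2]
  have : ((2:ℕ).factorial : ℝ) = 2 := by norm_num [Nat.factorial]
  rw [this]
  field_simp
  rw [← mul_pow, mul_one_div_cancel hb.ne', one_pow]

end LaplaceAux

/-- Bias and mean squared error of the improved pan-private density estimator (OptBern):
with `t = tanh(ε/2)`, if `b_1, …, b_m` are i.i.d. `Bernoulli(1/2 + t(d − 1/2))`, `L` is an
independent `Laplace(0, 1/(εm))` random variable, and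
`d̃ = (1/t)((1/m)∑ b_i − 1/2 + t/2) + L`, then `E[d̃] = d` and
`E[(d̃ − d)²] = (1/(4m))(1/t² − 1) + d(1−d)/m + 2/(m²ε²) ≤ 1/(4mt²) + 2/(m²ε²)`. -/
theorem stmt_11 {Ω : Type*} [MeasurableSpace Ω] (P : Measure Ω) [IsProbabilityMeasure P]
    (ε : ℝ) (hε0 : 0 < ε) (hε1 : ε ≤ 1 / 2) (m : ℕ) (hm : 1 ≤ m) (d : ℝ)
    (hd : d ∈ Set.Icc (0 : ℝ) 1)
    (t : ℝ) (ht : t = Real.tanh (ε / 2))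
    (b : Fin m → Ω → ℝ) (L : Ω → ℝ)
    (hbmeas : ∀ i, Measurable (b i)) (hLmeas : Measurable L)
    (hb01 : ∀ i ω, b i ω = 0 ∨ b i ω = 1)
    (hbdist : ∀ i, P {ω | b i ω = 1} = ENNReal.ofReal (1 / 2 + t * (d - 1 / 2)))
    (hLlaw : Measure.map L P = laplaceMeasure (1 / (ε * m)))
    (hindep : iIndepFun (fun o : Option (Fin m) => Option.elim o L b) P) :
    (∫ ω, ((1 / t) * ((1 / (m : ℝ)) * ∑ i, b i ω - 1 / 2 + t / 2) + L ω) ∂P) = d ∧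
    (∫ ω, (((1 / t) * ((1 / (m : ℝ)) * ∑ i, b i ω - 1 / 2 + t / 2) + L ω) - d) ^ 2 ∂P) =
      (1 / (4 * m)) * (1 / t ^ 2 - 1) + d * (1 - d) / m + 2 / (m ^ 2 * ε ^ 2) ∧
    (1 / (4 * m)) * (1 / t ^ 2 - 1) + d * (1 - d) / m + 2 / (m ^ 2 * ε ^ 2) ≤
      1 / (4 * m * t ^ 2) + 2 / (m ^ 2 * ε ^ 2) := by
  have hd0 := hd.1
  have hd1 := hd.2
  have hmR : (0:ℝ) < m := by exact_mod_cast Nat.lt_of_lt_of_le Nat.zero_lt_one hm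
  have hm0 : (m:ℝ) ≠ 0 := ne_of_gt hmR
  have hεne : ε ≠ 0 := ne_of_gt hε0
  have ht0 : 0 < t := by
    rw [ht, Real.tanh_eq_sinh_div_cosh]
    exact div_pos (by rw [Real.sinh_pos_iff]; linarith) (Real.cosh_pos _)
  have ht1 : t < 1 := by
    rw [ht, Real.tanh_eq_sinh_div_cosh, div_lt_one (Real.cosh_pos _)]
    exact Real.sinh_lt_cosh _
  have htne : t ≠ 0 := ne_of_gt ht0
  set p : ℝ := 1 / 2 + t * (d - 1 / 2) with hpdef
  have hp0 : 0 ≤ p := by rw [hpdef]; nlinarith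
  have hp1 : p ≤ 1 := by rw [hpdef]; nlinarith
  -- Bernoulli basics
  have hbint : ∀ i, Integrable (b i) P := by
    intro i
    apply Integrable.mono' (integrable_const (1:ℝ)) (hbmeas i).aestronglyMeasurable
    filter_upwards with ω
    rcases hb01 i ω with h | h <;> simp [h]
  have hEb : ∀ i, ∫ ω, b i ω ∂P = p := by
    intro i
    have hs : MeasurableSet {ω | b i ω = 1} := (hbmeas i) (measurableSet_singleton 1)
    have hind : (fun ω => b i ω) = Set.indicator {ω | b i ω = 1} (1 : Ω → ℝ) := by
      funext ω
      rcases hb01 i ω with h | h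
      · have hni : ω ∉ {ω | b i ω = 1} := by simp [Set.mem_setOf_eq, h]
        rw [h, Set.indicator_of_notMem hni]
      · have hi : ω ∈ {ω | b i ω = 1} := h
        rw [h, Set.indicator_of_mem hi]
        rfl
    calc ∫ ω, b i ω ∂P = ∫ ω, Set.indicator {ω | b i ω = 1} (1 : Ω → ℝ) ω ∂P := by
          rw [← hind]
      _ = (P {ω | b i ω = 1}).toReal := integral_indicator_one hs
      _ = p := by rw [hbdist i, ENNReal.toReal_ofReal hp0]
  have hYbd : ∀ (i : Fin m) ω, ‖b i ω - p‖ ≤ 1 := by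
    intro i ω
    rcases hb01 i ω with h | h <;> rw [Real.norm_eq_abs, h, abs_le] <;> constructor <;> linarith
  have hYmeas : ∀ i : Fin m, Measurable fun ω => b i ω - p :=
    fun i => (hbmeas i).sub measurable_const
  have hYint : ∀ i : Fin m, Integrable (fun ω => b i ω - p) P :=
    fun i => (hbint i).sub (integrable_const p)
  have hEY : ∀ i, ∫ ω, (b i ω - p) ∂P = 0 := by
    intro i
    rw [integral_sub (hbint i) (integrable_const p), hEb i, integral_const]
    simp
  have hbb : ∀ i j : Fin m, i ≠ j →
      IndepFun (fun ω => b i ω - p) (fun ω => b j ω - p) P := by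
    intro i j hij
    have h := hindep.indepFun (show (some i : Option (Fin m)) ≠ some j by simpa using hij)
    exact h.comp (measurable_id.sub measurable_const) (measurable_id.sub measurable_const)
  have hbL : ∀ i : Fin m, IndepFun (fun ω => b i ω - p) L P := by
    intro i
    have h := hindep.indepFun (show (some i : Option (Fin m)) ≠ none by simp)
    exact h.comp (measurable_id.sub measurable_const) measurable_id
  have hYmul_int : ∀ i j : Fin m, Integrable (fun ω => (b i ω - p) * (b j ω - p)) P :=
    fun i j => Integrable.bdd_mul (hYint j) (hYmeas i).aestronglyMeasurable
      (Filter.Eventually.of_forall fun ω => hYbd i ω)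
  have hEYY : ∀ i j : Fin m, i ≠ j → ∫ ω, (b i ω - p) * (b j ω - p) ∂P = 0 := by
    intro i j hij
    rw [(hbb i j hij).integral_fun_mul_eq_mul_integral (hYmeas i).aestronglyMeasurable
      (hYmeas j).aestronglyMeasurable, hEY i, zero_mul]
  have hEY2 : ∀ i : Fin m, ∫ ω, (b i ω - p) * (b i ω - p) ∂P = p - p ^ 2 := by
    intro i
    have hpt : ∀ ω, (b i ω - p) * (b i ω - p) = (1 - 2 * p) * b i ω + p ^ 2 := by
      intro ω
      rcases hb01 i ω with h | h <;> rw [h] <;> ring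
    simp only [hpt]
    rw [integral_add ((hbint i).const_mul _) (integrable_const _), integral_const_mul, hEb i,
      integral_const]
    simp only [measure_univ, probReal_univ, ENNReal.toReal_one, smul_eq_mul, one_mul]
    ring
  -- Laplace moments
  set β : ℝ := 1 / (ε * m) with hβdef
  have hβ : 0 < β := by rw [hβdef]; positivity
  have hLint : Integrable L P := by
    have h1 : Integrable (fun x : ℝ => x) (Measure.map L P) := by
      rw [hLlaw]
      refine (laplace_integrable_iff β hβ _).2 ?_
      simpa using laplace_pdf_mul_integrable β hβ 1
    exact (integrable_map_measure measurable_id.aestronglyMeasurable hLmeas.aemeasurable).1 h1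
  have hEL : ∫ ω, L ω ∂P = 0 := by
    have h1 : ∫ ω, L ω ∂P = ∫ x, x ∂(Measure.map L P) :=
      (integral_map hLmeas.aemeasurable measurable_id.aestronglyMeasurable).symm
    rw [h1, hLlaw, laplace_integral_eq β hβ]
    exact laplace_first_moment β hβ
  have hL2int : Integrable (fun ω => L ω ^ 2) P := by
    have h1 : Integrable (fun x : ℝ => x ^ 2) (Measure.map L P) := by
      rw [hLlaw]
      exact (laplace_integrable_iff β hβ _).2 (laplace_pdf_mul_integrable β hβ 2)
    exact (integrable_map_measure (measurable_id.pow_const 2).aestronglyMeasurable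
      hLmeas.aemeasurable).1 h1
  have hEL2 : ∫ ω, L ω ^ 2 ∂P = 2 * β ^ 2 := by
    have h1 : ∫ ω, L ω ^ 2 ∂P = ∫ x, x ^ 2 ∂(Measure.map L P) :=
      (integral_map hLmeas.aemeasurable (measurable_id.pow_const 2).aestronglyMeasurable).symm
    rw [h1, hLlaw, laplace_integral_eq β hβ]
    exact laplace_second_moment β hβ
  -- centered sum
  have hXrw : ∀ ω, (∑ i, b i ω) - m * p = ∑ i, (b i ω - p) := by
    intro ω
    rw [Finset.sum_sub_distrib, Finset.sum_const, Finset.card_univ, Fintype.card_fin,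
      nsmul_eq_mul]
  have hSmeas : Measurable fun ω => (∑ i, b i ω) - (m:ℝ) * p :=
    (Finset.measurable_sum Finset.univ fun i _ => hbmeas i).sub measurable_const
  have hSbd : ∀ ω, ‖(∑ i, b i ω) - (m:ℝ) * p‖ ≤ m := by
    intro ω
    rw [hXrw ω]
    calc ‖∑ i, (b i ω - p)‖ ≤ ∑ i, ‖b i ω - p‖ := norm_sum_le _ _
      _ ≤ ∑ _i : Fin m, (1:ℝ) := Finset.sum_le_sum fun i _ => hYbd i ω
      _ = m := by simp
  have hXint : Integrable (fun ω => (∑ i, b i ω) - (m:ℝ) * p) P :=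
    (integrable_finset_sum _ fun i _ => hbint i).sub (integrable_const _)
  have hEX : ∫ ω, ((∑ i, b i ω) - (m:ℝ) * p) ∂P = 0 := by
    rw [integral_sub (integrable_finset_sum _ fun i _ => hbint i) (integrable_const _),
      integral_finset_sum _ fun i _ => hbint i, integral_const]
    simp [hEb]
  have heqX2 : (fun ω => ((∑ i, b i ω) - (m:ℝ) * p) ^ 2)
      = fun ω => ∑ i, ∑ j, (b i ω - p) * (b j ω - p) := by
    funext ω
    rw [hXrw ω, sq, Finset.sum_mul_sum]
  have hX2int : Integrable (fun ω => ((∑ i, b i ω) - (m:ℝ) * p) ^ 2) P := by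
    rw [heqX2]
    exact integrable_finset_sum _ fun i _ => integrable_finset_sum _ fun j _ => hYmul_int i j
  have hEX2 : ∫ ω, ((∑ i, b i ω) - (m:ℝ) * p) ^ 2 ∂P = m * (p - p ^ 2) := by
    rw [heqX2, integral_finset_sum _
      (fun i _ => integrable_finset_sum _ fun j _ => hYmul_int i j)]
    have hin : ∀ i : Fin m, ∫ ω, ∑ j, (b i ω - p) * (b j ω - p) ∂P = p - p ^ 2 := by
      intro i
      rw [integral_finset_sum _ fun j _ => hYmul_int i j,
        Finset.sum_eq_single i (fun j _ hji => hEYY i j (Ne.symm hji))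
          (fun h => absurd (Finset.mem_univ i) h)]
      exact hEY2 i
    calc ∑ i : Fin m, ∫ ω, ∑ j, (b i ω - p) * (b j ω - p) ∂P
        = ∑ _i : Fin m, (p - p ^ 2) := Finset.sum_congr rfl fun i _ => hin i
      _ = m * (p - p ^ 2) := by
          rw [Finset.sum_const, Finset.card_univ, Fintype.card_fin, nsmul_eq_mul]
  have hXLint : Integrable (fun ω => ((∑ i, b i ω) - (m:ℝ) * p) * L ω) P :=
    Integrable.bdd_mul hLint hSmeas.aestronglyMeasurable (Filter.Eventually.of_forall hSbd)
  have hEXL : ∫ ω, ((∑ i, b i ω) - (m:ℝ) * p) * L ω ∂P = 0 := by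
    have heq : (fun ω => ((∑ i, b i ω) - (m:ℝ) * p) * L ω)
        = fun ω => ∑ i, (b i ω - p) * L ω := by
      funext ω
      rw [hXrw ω, Finset.sum_mul]
    rw [heq, integral_finset_sum _ (fun i _ => Integrable.bdd_mul hLint
      (hYmeas i).aestronglyMeasurable (Filter.Eventually.of_forall fun ω => hYbd i ω))]
    apply Finset.sum_eq_zero
    intro i _
    rw [(hbL i).integral_fun_mul_eq_mul_integral (hYmeas i).aestronglyMeasurable hLmeas.aestronglyMeasurable,
      hEY i, zero_mul]
  refine ⟨?_, ?_, ?_⟩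
  · -- first moment
    have heq1 : (fun ω => (1 / t) * ((1 / (m:ℝ)) * ∑ i, b i ω - 1 / 2 + t / 2) + L ω)
        = fun ω => (1 / (t * m)) * ((∑ i, b i ω) - (m:ℝ) * p) + (d + L ω) := by
      funext ω
      rw [hpdef]
      field_simp
      ring
    have hdL : Integrable (fun ω => d + L ω) P := (integrable_const d).add hLint
    rw [heq1, integral_add (hXint.const_mul _) hdL,
      integral_const_mul, hEX, integral_add (integrable_const d) hLint, integral_const, hEL]
    simp
  · -- second moment
    have heq2 : (fun ω => (((1 / t) * ((1 / (m:ℝ)) * ∑ i, b i ω - 1 / 2 + t / 2) + L ω) - d) ^ 2)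
        = fun ω => (1 / (t * m)) ^ 2 * ((∑ i, b i ω) - (m:ℝ) * p) ^ 2
            + (2 * (1 / (t * m))) * (((∑ i, b i ω) - (m:ℝ) * p) * L ω) + L ω ^ 2 := by
      funext ω
      rw [hpdef]
      field_simp
      ring
    have hA : Integrable (fun ω => (1 / (t * (m:ℝ))) ^ 2 * ((∑ i, b i ω) - (m:ℝ) * p) ^ 2) P :=
      hX2int.const_mul _
    have hB : Integrable
        (fun ω => (2 * (1 / (t * (m:ℝ)))) * (((∑ i, b i ω) - (m:ℝ) * p) * L ω)) P :=
      hXLint.const_mul _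
    have hAB : Integrable (fun ω => (1 / (t * (m:ℝ))) ^ 2 * ((∑ i, b i ω) - (m:ℝ) * p) ^ 2
        + (2 * (1 / (t * (m:ℝ)))) * (((∑ i, b i ω) - (m:ℝ) * p) * L ω)) P := hA.add hB
    rw [heq2, integral_add hAB hL2int,
      integral_add hA hB, integral_const_mul,
      integral_const_mul, hEX2, hEXL, hEL2, hpdef, hβdef]
    field_simp
    ring
  · -- inequality
    have key : 1 / (4 * (m:ℝ) * t ^ 2)
        - ((1 / (4 * m)) * (1 / t ^ 2 - 1) + d * (1 - d) / m) = (d - 1 / 2) ^ 2 / m := by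
      field_simp
      ring
    have h4 : (0:ℝ) ≤ (d - 1 / 2) ^ 2 / m := by positivity
    linarith
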